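/- The image of the Pogorelov map Φ : H³ × H³ → ℝ³ × ℝ³ is exactly the set {(a,b) ∈ ℝ³ × ℝ³ | ‖a‖ + ‖b‖ < 2}, where ‖·‖ denotes the Euclidean norm on ℝ³. -/

import Mathlib

noncomputable section

/-- Minkowski inner product on ℝ⁴: ⟨x,y⟩ = −x₀y₀ + x₁y₁ + x₂y₂ + x₃y₃. -/
def mink (x y : Fin 4 → ℝ) : ℝ :=
  -(x 0 * y 0) + x 1 * y 1 + x 2 * y 2 + x 3 * y 3

/-- The hyperboloid model of hyperbolic 3-space. -/
def Hyp : Set (Fin 4 → ℝ) := {x | 0 < x 0 ∧ mink x x = -1}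

/-- Spatial part x⃗ of x = (x₀, x⃗). -/
def spat (x : Fin 4 → ℝ) : Fin 3 → ℝ := fun i => x i.succ

/-- The Pogorelov map Φ(x,y) = (2x⃗/(x₀+y₀), 2y⃗/(x₀+y₀)). -/
def pog (x y : Fin 4 → ℝ) : (Fin 3 → ℝ) × (Fin 3 → ℝ) :=
  ((2 / (x 0 + y 0)) • spat x, (2 / (x 0 + y 0)) • spat y)

/-- Euclidean norm on ℝ³. -/
def enorm3 (a : Fin 3 → ℝ) : ℝ := Real.sqrt (a 0 ^ 2 + a 1 ^ 2 + a 2 ^ 2)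

lemma succ0 : (0 : Fin 3).succ = (1 : Fin 4) := by decide
lemma succ1 : (1 : Fin 3).succ = (2 : Fin 4) := by decide
lemma succ2 : (2 : Fin 3).succ = (3 : Fin 4) := by decide

lemma mink_cons (e0 e1 e2 e3 : ℝ) :
    mink ![e0,e1,e2,e3] ![e0,e1,e2,e3] = -(e0*e0)+e1*e1+e2*e2+e3*e3 := rfl

lemma spat_cons (x0 e1 e2 e3 : ℝ) : spat ![x0, e1, e2, e3] = ![e1, e2, e3] := by
  funext i
  fin_cases i <;> rfl

lemma enorm3_smul (c : ℝ) (hc : 0 ≤ c) (a : Fin 3 → ℝ) :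
    enorm3 (c • a) = c * enorm3 a := by
  unfold enorm3
  simp only [Pi.smul_apply, smul_eq_mul]
  rw [show (c * a 0) ^ 2 + (c * a 1) ^ 2 + (c * a 2) ^ 2
      = c ^ 2 * (a 0 ^ 2 + a 1 ^ 2 + a 2 ^ 2) by ring,
    Real.sqrt_mul (sq_nonneg c), Real.sqrt_sq hc]

lemma enorm3_spat_lt {x : Fin 4 → ℝ} (hx : x ∈ Hyp) : enorm3 (spat x) < x 0 := by
  obtain ⟨hx0, hxm⟩ := hx
  have hspat : enorm3 (spat x) = Real.sqrt (x 1 ^ 2 + x 2 ^ 2 + x 3 ^ 2) := by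
    unfold enorm3 spat
    rw [succ0, succ1, succ2]
  have hsum : x 1 ^ 2 + x 2 ^ 2 + x 3 ^ 2 = x 0 ^ 2 - 1 := by
    unfold mink at hxm; nlinarith [hxm]
  rw [hspat, hsum]
  have h1 : x 0 ^ 2 - 1 < x 0 ^ 2 := by linarith
  calc Real.sqrt (x 0 ^ 2 - 1) < Real.sqrt (x 0 ^ 2) := by
        apply Real.sqrt_lt_sqrt _ h1
        nlinarith [sq_nonneg (x 1), sq_nonneg (x 2), sq_nonneg (x 3), hsum]
    _ = x 0 := Real.sqrt_sq hx0.le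

set_option maxHeartbeats 1600000 in
/-- The image of the Pogorelov map is {(a,b) ∈ ℝ³ × ℝ³ | ‖a‖ + ‖b‖ < 2}. -/
theorem pogorelov_image :
    (fun p : (Fin 4 → ℝ) × (Fin 4 → ℝ) => pog p.1 p.2) '' (Hyp ×ˢ Hyp)
      = {p : (Fin 3 → ℝ) × (Fin 3 → ℝ) | enorm3 p.1 + enorm3 p.2 < 2} := by
  ext ⟨a, b⟩
  constructor
  · rintro ⟨⟨x, y⟩, ⟨hx, hy⟩, heq⟩
    simp only [pog, Prod.mk.injEq] at heq
    obtain ⟨ha, hb⟩ := heq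
    subst ha hb
    simp only [Set.mem_setOf_eq]
    have hs : 0 < x 0 + y 0 := by linarith [hx.1, hy.1]
    have hc : (0:ℝ) ≤ 2 / (x 0 + y 0) := by positivity
    rw [enorm3_smul _ hc, enorm3_smul _ hc]
    have hex := enorm3_spat_lt hx
    have hey := enorm3_spat_lt hy
    have h2 : 2 / (x 0 + y 0) * (x 0 + y 0) = 2 := by field_simp
    nlinarith [mul_lt_mul_of_pos_left (add_lt_add hex hey)
      (by positivity : (0:ℝ) < 2 / (x 0 + y 0))]
  · intro h
    simp only [Set.mem_setOf_eq] at h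
    have hsa : 0 ≤ enorm3 a := Real.sqrt_nonneg _
    have hsb : 0 ≤ enorm3 b := Real.sqrt_nonneg _
    have hA : enorm3 a ^ 2 = a 0 ^ 2 + a 1 ^ 2 + a 2 ^ 2 := Real.sq_sqrt (by positivity)
    have hB : enorm3 b ^ 2 = b 0 ^ 2 + b 1 ^ 2 + b 2 ^ 2 := Real.sq_sqrt (by positivity)
    obtain ⟨sa, hsadef⟩ : ∃ s, enorm3 a = s := ⟨_, rfl⟩
    obtain ⟨sb, hsbdef⟩ : ∃ s, enorm3 b = s := ⟨_, rfl⟩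
    rw [hsadef] at hsa hA h
    rw [hsbdef] at hsb hB h
    obtain ⟨A, hAdef⟩ : ∃ A, a 0 ^ 2 + a 1 ^ 2 + a 2 ^ 2 = A := ⟨_, rfl⟩
    obtain ⟨B, hBdef⟩ : ∃ B, b 0 ^ 2 + b 1 ^ 2 + b 2 ^ 2 = B := ⟨_, rfl⟩
    rw [hAdef] at hA
    rw [hBdef] at hB
    have hA0 : 0 ≤ A := hA ▸ sq_nonneg sa
    have hB0 : 0 ≤ B := hB ▸ sq_nonneg sb
    have hDpos : 0 < 4 - 2*A - 2*B + (A - B)^2/4 := by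
      have h1 : 0 < 2 - (sa + sb)^2/2 := by nlinarith
      have h2 : 0 < 2 - (sa - sb)^2/2 := by nlinarith [mul_nonneg hsa hsb]
      nlinarith [mul_pos h1 h2, hA, hB]
    have hAlt : A < 4 := by nlinarith
    have hBlt : B < 4 := by nlinarith
    obtain ⟨D, hDdef⟩ : ∃ D, 4 - 2*A - 2*B + (A - B)^2/4 = D := ⟨_, rfl⟩
    rw [hDdef] at hDpos
    obtain ⟨r, hr, hr2⟩ : ∃ r, 0 < r ∧ r ^ 2 = D :=
      ⟨Real.sqrt D, Real.sqrt_pos.mpr hDpos, Real.sq_sqrt hDpos.le⟩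
    have hrne : r ≠ 0 := hr.ne'
    have hr2ne : r ^ 2 ≠ 0 := pow_ne_zero 2 hrne
    have keyA : (2 + (A - B)/2) ^ 2 = r ^ 2 + 4 * A := by
      linear_combination -hr2 + hDdef
    have keyB : (2 - (A - B)/2) ^ 2 = r ^ 2 + 4 * B := by
      linear_combination -hr2 + hDdef
    refine ⟨(![(2 + (A - B)/2)/r, 2/r * a 0, 2/r * a 1, 2/r * a 2],
             ![(2 - (A - B)/2)/r, 2/r * b 0, 2/r * b 1, 2/r * b 2]),
            ⟨⟨?_, ?_⟩, ⟨?_, ?_⟩⟩, ?_⟩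
    · show (0:ℝ) < (2 + (A - B)/2)/r
      apply div_pos (by linarith) hr
    · show mink _ _ = -1
      rw [mink_cons]
      trans (-(2 + (A - B)/2)^2 + 4*(a 0 ^ 2 + a 1 ^ 2 + a 2 ^ 2))/r^2
      · field_simp
        ring
      · rw [hAdef, div_eq_iff hr2ne]
        linear_combination -keyA
    · show (0:ℝ) < (2 - (A - B)/2)/r
      apply div_pos (by linarith) hr
    · show mink _ _ = -1
      rw [mink_cons]
      trans (-(2 - (A - B)/2)^2 + 4*(b 0 ^ 2 + b 1 ^ 2 + b 2 ^ 2))/r^2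
      · field_simp
        ring
      · rw [hBdef, div_eq_iff hr2ne]
        linear_combination -keyB
    · show pog _ _ = (a, b)
      unfold pog
      rw [spat_cons, spat_cons]
      have hsum : (![(2 + (A - B)/2)/r, 2/r * a 0, 2/r * a 1, 2/r * a 2] : Fin 4 → ℝ) 0
          + (![(2 - (A - B)/2)/r, 2/r * b 0, 2/r * b 1, 2/r * b 2] : Fin 4 → ℝ) 0 = 4/r := by
        show (2 + (A - B)/2)/r + (2 - (A - B)/2)/r = 4/r
        rw [← add_div]
        norm_num
      rw [hsum]
      have hcoef : 2 / ((4:ℝ)/r) = r/2 := by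
        rw [div_div_eq_mul_div]
        ring
      rw [hcoef]
      have hva : (r/2) • (![2/r * a 0, 2/r * a 1, 2/r * a 2] : Fin 3 → ℝ) = a := by
        funext i
        fin_cases i
        · show r/2 * (2/r * a 0) = a 0
          field_simp
        · show r/2 * (2/r * a 1) = a 1
          field_simp
        · show r/2 * (2/r * a 2) = a 2
          field_simp
      have hvb : (r/2) • (![2/r * b 0, 2/r * b 1, 2/r * b 2] : Fin 3 → ℝ) = b := by
        funext i
        fin_cases i
        · show r/2 * (2/r * b 0) = b 0
          field_simp
        · show r/2 * (2/r * b 1) = b 1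
          field_simp
        · show r/2 * (2/r * b 2) = b 2
          field_simp
      rw [hva, hvb]
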